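/- Let (c₁,c₂) ∈ ℝ². Then Re[α₂(c₁,c₂)] ≤ −1/2 if and only if c₂ ≥ 45 + 12c₁ + c₁² when c₁ ≥ −11/4, and c₂ ≥ −105/16 − (19/2)c₁ when c₁ < −11/4. -/

import Mathlib

noncomputable section

/-- The principal branch of the complex square root:
`√z = √r·e^{iφ/2}` for `z = r·e^{iφ}` with `r > 0` and `-π < φ ≤ π`. -/
def csqrt (z : ℂ) : ℂ := z ^ (1/2 : ℂ)

/-- `α₁(c₁,c₂) = 3/2 - (1/2)√(5-4c₁+4√(1-4c₁+c₁²-c₂))`. -/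
def alpha1 (c₁ c₂ : ℝ) : ℂ :=
  3/2 - (1/2) * csqrt (5 - 4 * (c₁ : ℂ) + 4 * csqrt (1 - 4 * (c₁ : ℂ) + (c₁ : ℂ) ^ 2 - (c₂ : ℂ)))

/-- `α₂(c₁,c₂) = 3/2 - (1/2)√(5-4c₁-4√(1-4c₁+c₁²-c₂))`. -/
def alpha2 (c₁ c₂ : ℝ) : ℂ :=
  3/2 - (1/2) * csqrt (5 - 4 * (c₁ : ℂ) - 4 * csqrt (1 - 4 * (c₁ : ℂ) + (c₁ : ℂ) ^ 2 - (c₂ : ℂ)))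

/-- `α₃(c₁,c₂) = 3/2 + (1/2)√(5-4c₁-4√(1-4c₁+c₁²-c₂))`. -/
def alpha3 (c₁ c₂ : ℝ) : ℂ :=
  3/2 + (1/2) * csqrt (5 - 4 * (c₁ : ℂ) - 4 * csqrt (1 - 4 * (c₁ : ℂ) + (c₁ : ℂ) ^ 2 - (c₂ : ℂ)))

/-- `α₄(c₁,c₂) = 3/2 + (1/2)√(5-4c₁+4√(1-4c₁+c₁²-c₂))`. -/
def alpha4 (c₁ c₂ : ℝ) : ℂ :=
  3/2 + (1/2) * csqrt (5 - 4 * (c₁ : ℂ) + 4 * csqrt (1 - 4 * (c₁ : ℂ) + (c₁ : ℂ) ^ 2 - (c₂ : ℂ)))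

lemma csqrt_re (z : ℂ) : (csqrt z).re = Real.sqrt ((‖z‖ + z.re) / 2) := by
  rw [csqrt, show (1/2 : ℂ) = (2⁻¹ : ℂ) by norm_num]
  exact Complex.cpow_inv_two_re z

lemma csqrt_im (z : ℂ) (h : 0 ≤ z.im) :
    (csqrt z).im = Real.sqrt ((‖z‖ - z.re) / 2) := by
  rw [csqrt, show (1/2 : ℂ) = (2⁻¹ : ℂ) by norm_num]
  exact Complex.cpow_inv_two_im_eq_sqrt h

lemma key_aux (c₁ c₂ a b : ℝ) (ha : 0 ≤ a) (hb : 0 ≤ b)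
    (hab : a ^ 2 - b ^ 2 = 1 - 4 * c₁ + c₁ ^ 2 - c₂) (hprod : a * b = 0) :
    (32 ≤ Real.sqrt ((5 - 4 * c₁ - 4 * a) ^ 2 + 16 * b ^ 2) + (5 - 4 * c₁ - 4 * a)) ↔
      ((-11/4 ≤ c₁ → 45 + 12 * c₁ + c₁ ^ 2 ≤ c₂) ∧
        (c₁ < -11/4 → -105/16 - (19/2) * c₁ ≤ c₂)) := by
  set E : ℝ := 5 - 4 * c₁ - 4 * a with hE
  set M : ℝ := Real.sqrt (E ^ 2 + 16 * b ^ 2) with hM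
  have hMnn : 0 ≤ M := Real.sqrt_nonneg _
  have hM2 : M ^ 2 = E ^ 2 + 16 * b ^ 2 := by
    rw [hM, Real.sq_sqrt]; positivity
  rcases mul_eq_zero.1 hprod with h0 | h0
  · subst h0
    constructor
    · intro h
      have hsq : 1024 - 64 * E ≤ 16 * b ^ 2 := by
        rcases le_or_gt (32 - E) 0 with hc | hc
        · nlinarith
        · nlinarith [sq_nonneg (M - (32 - E))]
      constructor
      · intro _; nlinarith
      · intro hc; nlinarith [sq_nonneg (c₁ + 11/4), sq_nonneg b]
    · rintro ⟨h1, h2⟩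
      have hb2 : 1024 - 64 * E ≤ 16 * b ^ 2 := by
        rcases le_or_gt (-11/4) c₁ with hc | hc
        · have := h1 hc; nlinarith
        · have := h2 hc; nlinarith [sq_nonneg b]
      rcases le_or_gt (32 - E) 0 with hc | hc
      · linarith
      · have : 32 - E ≤ M := by
          rw [hM, Real.le_sqrt (by linarith) (by positivity)]
          nlinarith
        linarith
  · subst h0
    have hM' : M = |E| := by
      rw [hM]; simp [Real.sqrt_sq_eq_abs]
    constructor
    · intro h
      have hE16 : 16 ≤ E := by
        rcases abs_cases E with ⟨he, _⟩ | ⟨he, _⟩ <;> rw [hM', he] at h <;> linarith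
      have h4a : 4 * a ≤ -11 - 4 * c₁ := by simp only [hE] at hE16; linarith
      constructor
      · intro hc; nlinarith
      · intro hc; nlinarith [sq_nonneg a]
    · rintro ⟨h1, h2⟩
      have hE16 : 16 ≤ E := by
        rcases le_or_gt (-11/4) c₁ with hc | hc
        · have := h1 hc
          have ha0 : a ^ 2 ≤ 0 := by nlinarith
          have : a = 0 := by nlinarith
          have : c₁ ≤ -11/4 := by nlinarith
          simp only [hE]; nlinarith
        · have := h2 hc
          have h16 : 16 * a ^ 2 ≤ (11 + 4 * c₁) ^ 2 := by nlinarith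
          have : 4 * a ≤ -(11 + 4 * c₁) := by nlinarith
          simp only [hE]; linarith
      rw [hM', abs_of_nonneg (by linarith)]; linarith

theorem stmt7 (c₁ c₂ : ℝ) :
    (alpha2 c₁ c₂).re ≤ -1/2 ↔
      ((-11/4 ≤ c₁ → 45 + 12 * c₁ + c₁ ^ 2 ≤ c₂) ∧
        (c₁ < -11/4 → -105/16 - (19/2) * c₁ ≤ c₂)) := by
  set D : ℝ := 1 - 4 * c₁ + c₁ ^ 2 - c₂ with hD
  have hDc : (1 - 4 * (c₁ : ℂ) + (c₁ : ℂ) ^ 2 - (c₂ : ℂ)) = (D : ℂ) := by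
    rw [hD]; push_cast; ring
  have hDnn1 : 0 ≤ (|D| + D) / 2 := by
    have := neg_abs_le D; linarith
  have hDnn2 : 0 ≤ (|D| - D) / 2 := by
    have := le_abs_self D; linarith
  set a : ℝ := Real.sqrt ((|D| + D) / 2) with ha'
  set b : ℝ := Real.sqrt ((|D| - D) / 2) with hb'
  have hsre : (csqrt (D : ℂ)).re = a := by
    rw [csqrt_re]; simp only [Complex.norm_real, Real.norm_eq_abs, Complex.ofReal_re, ha']
  have hsim : (csqrt (D : ℂ)).im = b := by
    rw [csqrt_im _ (by simp)]; simp only [Complex.norm_real, Real.norm_eq_abs, Complex.ofReal_re, hb']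
  set w : ℂ := 5 - 4 * (c₁ : ℂ) - 4 * csqrt (D : ℂ) with hw
  have hwre : w.re = 5 - 4 * c₁ - 4 * a := by
    simp [hw, Complex.sub_re, Complex.mul_re, hsre]
  have hwim : w.im = -(4 * b) := by
    simp [hw, Complex.sub_im, Complex.mul_im, hsim]
  have habsw : ‖w‖ = Real.sqrt ((5 - 4 * c₁ - 4 * a) ^ 2 + 16 * b ^ 2) := by
    rw [Complex.norm_def, Complex.normSq_apply, hwre, hwim]
    ring_nf
  have hre2 : (alpha2 c₁ c₂).re = 3/2 - Real.sqrt ((‖w‖ + w.re) / 2) / 2 := by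
    rw [alpha2, hDc]
    rw [show (5 - 4 * (c₁ : ℂ) - 4 * csqrt (D : ℂ)) = w from rfl]
    simp [Complex.sub_re, Complex.mul_re, csqrt_re w]
    ring
  have hwx : 0 ≤ (‖w‖ + w.re) / 2 := by
    have := Complex.abs_re_le_norm w
    have := abs_nonneg w.re
    have : -w.re ≤ ‖w‖ := by
      rcases abs_cases w.re with ⟨he, _⟩ | ⟨he, _⟩ <;> linarith [Complex.abs_re_le_norm w]
    linarith
  have hiff : (alpha2 c₁ c₂).re ≤ -1/2 ↔ 32 ≤ ‖w‖ + w.re := by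
    rw [hre2]
    constructor
    · intro h
      have h4 : 4 ≤ Real.sqrt ((‖w‖ + w.re) / 2) := by linarith
      rw [Real.le_sqrt (by norm_num) hwx] at h4
      linarith
    · intro h
      have h4 : 4 ≤ Real.sqrt ((‖w‖ + w.re) / 2) := by
        rw [Real.le_sqrt (by norm_num) hwx]; linarith
      linarith
  rw [hiff, habsw, hwre]
  refine key_aux c₁ c₂ a b (Real.sqrt_nonneg _) (Real.sqrt_nonneg _) ?_ ?_
  · rw [ha', hb', Real.sq_sqrt hDnn1, Real.sq_sqrt hDnn2, hD]; ring
  · rw [ha', hb', ← Real.sqrt_mul hDnn1]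
    have : (|D| + D) / 2 * ((|D| - D) / 2) = 0 := by
      have h := sq_abs D; nlinarith
    rw [this, Real.sqrt_zero]
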